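/- Every cap in PG(5,2) has at most 32 points; that is, if S is a finite set of nonzero vectors of V = (Fin 6 → ZMod 2) such that no three pairwise distinct elements of S sum to 0, then the cardinality of S is at most 32. -/

import Mathlib

/-- The ambient 6-dimensional vector space over GF(2). -/
abbrev V : Type := Fin 6 → ZMod 2

/-- A cap in PG(5,2): a finite set of nonzero vectors of `V` no three pairwise
distinct elements of which sum to `0`. -/
def IsCap (S : Set V) : Prop :=
  S.Finite ∧ (∀ v ∈ S, v ≠ 0) ∧
    ∀ a ∈ S, ∀ b ∈ S, ∀ c ∈ S, a ≠ b → a ≠ c → b ≠ c → a + b + c ≠ 0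

/-- A cap is complete if it cannot be extended by any nonzero vector. -/
def IsCompleteCap (S : Set V) : Prop :=
  IsCap S ∧ ∀ v : V, v ≠ 0 → v ∉ S → ¬ IsCap (insert v S)

/-- Projective equivalence of caps: some linear automorphism of `V` maps one onto the other. -/
def ProjEquiv (S T : Set V) : Prop :=
  ∃ A : V ≃ₗ[ZMod 2] V, ⇑A '' S = T

/-- The `i`-th standard basis vector of `V`. -/
def e (i : Fin 6) : V := Pi.single i 1
/-- Every cap in PG(5,2) has at most 32 points. -/
theorem cap_card_le_32 (S : Set V) (hS : IsCap S) : S.ncard ≤ 32 := by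
  obtain ⟨hfin, hnz, hcap⟩ := hS
  rcases S.eq_empty_or_nonempty with rfl | ⟨a, ha⟩
  · simp
  -- T = a + (S \ {a})
  set T : Set V := (fun b => a + b) '' (S \ {a}) with hT
  have hTfin : T.Finite := hfin.diff.image _
  have hinj : Function.Injective (fun b : V => a + b) := fun x y h => by
    simpa using congrArg (fun z => a + z) h
  have hdisj : Disjoint S T := by
    rw [Set.disjoint_right]
    rintro x ⟨b, ⟨hbS, hba⟩, rfl⟩ hxS
    have hba' : a ≠ b := fun h => hba h.symm
    have h1 : a + b ≠ a := fun h => hnz b hbS (by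
      have := congrArg (fun z => a + z) h
      simpa [← add_assoc, CharTwo.add_self_eq_zero] using this)
    have h2 : a + b ≠ b := fun h => hnz a ha (by
      have := congrArg (fun z => z + b) h
      simpa [add_assoc, CharTwo.add_self_eq_zero] using this)
    exact hcap a ha b hbS (a + b) hxS hba' (Ne.symm h1) (Ne.symm h2)
      (by rw [CharTwo.add_self_eq_zero])
  have hsub : S ∪ T ⊆ {(0 : V)}ᶜ := by
    rintro x (hx | ⟨b, ⟨hbS, hba⟩, rfl⟩)
    · exact hnz x hx
    · simp only [Set.mem_compl_iff, Set.mem_singleton_iff]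
      intro h
      have hab : a = b := by
        have h2 := congrArg (fun z => z + b) h
        simpa [add_assoc, CharTwo.add_self_eq_zero] using h2
      exact hba hab.symm
  have hcard : (S ∪ T).ncard ≤ ({(0 : V)}ᶜ : Set V).ncard :=
    Set.ncard_le_ncard hsub (Set.toFinite _)
  have hcompl : ({(0 : V)}ᶜ : Set V).ncard = 63 := by
    have h1 : ({(0:V)} : Set V).ncard + ({(0 : V)}ᶜ : Set V).ncard = Nat.card V :=
      Set.ncard_add_ncard_compl _
    have h2 : Nat.card V = 64 := by simp [Nat.card_eq_fintype_card, Fintype.card_fun]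
    have h3 : ({(0:V)} : Set V).ncard = 1 := Set.ncard_singleton _
    omega
  have hunion : (S ∪ T).ncard = S.ncard + T.ncard := Set.ncard_union_eq hdisj hfin hTfin
  have hTcard : T.ncard = S.ncard - 1 := by
    rw [hT, Set.ncard_image_of_injective _ hinj, Set.ncard_diff_singleton_of_mem ha]
  have hpos : 0 < S.ncard := (Set.ncard_pos hfin).mpr ⟨a, ha⟩
  omega
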